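/- The product B³ × B³ of two copies of the open Euclidean unit ball B³ = {a ∈ ℝ³ | ‖a‖ < 1} is contained in the image of the Pogorelov map Φ : H³ × H³ → ℝ³ × ℝ³. -/

import Mathlib

noncomputable section

/-- Minkowski inner product on ℝ⁴: ⟨x,y⟩ = −x₀y₀ + x₁y₁ + x₂y₂ + x₃y₃. -/
def mink (x y : Fin 4 → ℝ) : ℝ :=
  -(x 0 * y 0) + x 1 * y 1 + x 2 * y 2 + x 3 * y 3

/-- The hyperboloid model of hyperbolic 3-space. -/
def Hyp : Set (Fin 4 → ℝ) := {x | 0 < x 0 ∧ mink x x = -1}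

/-- Spatial part x⃗ of x = (x₀, x⃗). -/
def spat (x : Fin 4 → ℝ) : Fin 3 → ℝ := fun i => x i.succ

/-- The Pogorelov map Φ(x,y) = (2x⃗/(x₀+y₀), 2y⃗/(x₀+y₀)). -/
def pog (x y : Fin 4 → ℝ) : (Fin 3 → ℝ) × (Fin 3 → ℝ) :=
  ((2 / (x 0 + y 0)) • spat x, (2 / (x 0 + y 0)) • spat y)

/-- Euclidean norm on ℝ³. -/
def enorm3 (a : Fin 3 → ℝ) : ℝ := Real.sqrt (a 0 ^ 2 + a 1 ^ 2 + a 2 ^ 2)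

/-- The open Euclidean unit ball B³ ⊂ ℝ³. -/
def ball3 : Set (Fin 3 → ℝ) := {a | enorm3 a < 1}

lemma mink_cons (w v0 v1 v2 : ℝ) :
    mink ![w, v0, v1, v2] ![w, v0, v1, v2] = -(w * w) + v0 * v0 + v1 * v1 + v2 * v2 := rfl

lemma spat_cons (w v0 v1 v2 : ℝ) : spat ![w, v0, v1, v2] = ![v0, v1, v2] := by
  funext i; fin_cases i <;> rfl

lemma smul_cons3 (c v0 v1 v2 : ℝ) : c • (![v0, v1, v2] : Fin 3 → ℝ) = ![c * v0, c * v1, c * v2] := by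
  funext i; fin_cases i <;> simp

lemma vec3_eta (a : Fin 3 → ℝ) : ![a 0, a 1, a 2] = a := by
  funext i; fin_cases i <;> rfl

lemma pog_cons (w v0 v1 v2 w' u0 u1 u2 : ℝ) :
    pog ![w, v0, v1, v2] ![w', u0, u1, u2] =
      ((2 / (w + w')) • ![v0, v1, v2], (2 / (w + w')) • ![u0, u1, u2]) := by
  rw [pog, spat_cons, spat_cons]
  rfl

/-- B³ × B³ is contained in the image of the Pogorelov map. -/
theorem ball_prod_ball_subset_image :
    ball3 ×ˢ ball3 ⊆
      (fun p : (Fin 4 → ℝ) × (Fin 4 → ℝ) => pog p.1 p.2) '' (Hyp ×ˢ Hyp) := by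

  rintro ⟨a, b⟩ ⟨ha, hb⟩
  simp only [ball3, Set.mem_setOf_eq, enorm3] at ha hb
  have hα0 : (0:ℝ) ≤ a 0 ^ 2 + a 1 ^ 2 + a 2 ^ 2 := by positivity
  have hβ0 : (0:ℝ) ≤ b 0 ^ 2 + b 1 ^ 2 + b 2 ^ 2 := by positivity
  have hα1 : a 0 ^ 2 + a 1 ^ 2 + a 2 ^ 2 < 1 := by
    nlinarith [Real.sq_sqrt hα0, Real.sqrt_nonneg (a 0 ^ 2 + a 1 ^ 2 + a 2 ^ 2)]
  have hβ1 : b 0 ^ 2 + b 1 ^ 2 + b 2 ^ 2 < 1 := by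
    nlinarith [Real.sq_sqrt hβ0, Real.sqrt_nonneg (b 0 ^ 2 + b 1 ^ 2 + b 2 ^ 2)]
  have hD : 0 < (4 - (a 0 ^ 2 + a 1 ^ 2 + a 2 ^ 2) - (b 0 ^ 2 + b 1 ^ 2 + b 2 ^ 2)) ^ 2
      - 4 * (a 0 ^ 2 + a 1 ^ 2 + a 2 ^ 2) * (b 0 ^ 2 + b 1 ^ 2 + b 2 ^ 2) := by nlinarith
  obtain ⟨s, hs, hs2⟩ : ∃ s : ℝ, 0 < s ∧ s ^ 2 =
      (4 - (a 0 ^ 2 + a 1 ^ 2 + a 2 ^ 2) - (b 0 ^ 2 + b 1 ^ 2 + b 2 ^ 2)) ^ 2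
      - 4 * (a 0 ^ 2 + a 1 ^ 2 + a 2 ^ 2) * (b 0 ^ 2 + b 1 ^ 2 + b 2 ^ 2) :=
    ⟨Real.sqrt _, Real.sqrt_pos.mpr hD, Real.sq_sqrt hD.le⟩
  have hsne : s ≠ 0 := hs.ne'
  refine ⟨(![(4 + (a 0 ^ 2 + a 1 ^ 2 + a 2 ^ 2) - (b 0 ^ 2 + b 1 ^ 2 + b 2 ^ 2)) / s,
      4 / s * a 0, 4 / s * a 1, 4 / s * a 2],
      ![(4 + (b 0 ^ 2 + b 1 ^ 2 + b 2 ^ 2) - (a 0 ^ 2 + a 1 ^ 2 + a 2 ^ 2)) / s,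
      4 / s * b 0, 4 / s * b 1, 4 / s * b 2]), ⟨⟨?_, ?_⟩, ?_, ?_⟩, ?_⟩
  · exact div_pos (by nlinarith) hs
  · rw [mink_cons]
    have key : -((4 + (a 0 ^ 2 + a 1 ^ 2 + a 2 ^ 2) - (b 0 ^ 2 + b 1 ^ 2 + b 2 ^ 2)) / s *
        ((4 + (a 0 ^ 2 + a 1 ^ 2 + a 2 ^ 2) - (b 0 ^ 2 + b 1 ^ 2 + b 2 ^ 2)) / s))
        + 4 / s * a 0 * (4 / s * a 0) + 4 / s * a 1 * (4 / s * a 1)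
        + 4 / s * a 2 * (4 / s * a 2) =
        (-(4 + (a 0 ^ 2 + a 1 ^ 2 + a 2 ^ 2) - (b 0 ^ 2 + b 1 ^ 2 + b 2 ^ 2)) ^ 2
          + 16 * (a 0 ^ 2 + a 1 ^ 2 + a 2 ^ 2)) / s ^ 2 := by
      field_simp
      ring
    rw [key, hs2, div_eq_iff (by positivity)]
    ring
  · exact div_pos (by nlinarith) hs
  · rw [mink_cons]
    have key : -((4 + (b 0 ^ 2 + b 1 ^ 2 + b 2 ^ 2) - (a 0 ^ 2 + a 1 ^ 2 + a 2 ^ 2)) / s *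
        ((4 + (b 0 ^ 2 + b 1 ^ 2 + b 2 ^ 2) - (a 0 ^ 2 + a 1 ^ 2 + a 2 ^ 2)) / s))
        + 4 / s * b 0 * (4 / s * b 0) + 4 / s * b 1 * (4 / s * b 1)
        + 4 / s * b 2 * (4 / s * b 2) =
        (-(4 + (b 0 ^ 2 + b 1 ^ 2 + b 2 ^ 2) - (a 0 ^ 2 + a 1 ^ 2 + a 2 ^ 2)) ^ 2
          + 16 * (b 0 ^ 2 + b 1 ^ 2 + b 2 ^ 2)) / s ^ 2 := by
      field_simp
      ring
    rw [key, hs2, div_eq_iff (by positivity)]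
    ring
  · show pog _ _ = (a, b)
    rw [pog_cons]
    have hsum : (4 + (a 0 ^ 2 + a 1 ^ 2 + a 2 ^ 2) - (b 0 ^ 2 + b 1 ^ 2 + b 2 ^ 2)) / s +
        (4 + (b 0 ^ 2 + b 1 ^ 2 + b 2 ^ 2) - (a 0 ^ 2 + a 1 ^ 2 + a 2 ^ 2)) / s = 8 / s := by
      field_simp
      ring
    have h2 : (2:ℝ) / (8 / s) = s / 4 := by
      rw [div_div_eq_mul_div]
      field_simp
      ring
    rw [hsum, h2, smul_cons3, smul_cons3]
    have hc : ∀ c : ℝ, s / 4 * (4 / s * c) = c := by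
      intro c; field_simp
    rw [hc, hc, hc, hc, hc, hc, vec3_eta, vec3_eta]
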